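/- For any positive integers p and q and every real number x with 0 ≤ x ≤ 1/e, (∑_{k=0}^∞ (kp+q)^{k-1} q x^k/(p^k k!))^p = (∑_{k=0}^∞ (k+1)^{k-1} x^k / k!)^q, where each factor of the form a^{k-1} with k = 0 is interpreted as a^{-1} (so the k = 0 term of the first series is q·q^{-1} = 1 and that of the second series is 1). -/

import Mathlib

open Finset

noncomputable def abelC (a : ℝ) (k : ℕ) : ℝ := if k = 0 then 1 else a * ((k : ℝ) + a) ^ (k - 1)

lemma abelC_zero (a : ℝ) : abelC a 0 = 1 := rfl

lemma abelC_succ (a : ℝ) (k : ℕ) : abelC a (k + 1) = a * ((k : ℝ) + 1 + a) ^ k := by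
  simp [abelC]

noncomputable def altS (n d : ℕ) (c : ℝ) : ℝ :=
  ∑ k ∈ range (n + 1), (-1 : ℝ) ^ k * (n.choose k : ℝ) * (c + k) ^ d

lemma altS_rec (n d : ℕ) (c : ℝ) : altS (n + 1) d c = altS n d c - altS n d (c + 1) := by
  have h1 : altS (n+1) d c
      = (-1:ℝ)^0 * ((n+1).choose 0 : ℝ) * (c + (0:ℕ))^d
        + ∑ k ∈ range (n + 1), (-1 : ℝ) ^ (k+1) * ((n+1).choose (k+1) : ℝ) * (c + (k+1:ℕ)) ^ d := by
    unfold altS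
    rw [Finset.sum_range_succ' (fun k => (-1 : ℝ) ^ k * ((n+1).choose k : ℝ) * (c + k) ^ d)]
    ring
  have h2 : ∀ k ∈ range (n + 1),
      (-1 : ℝ) ^ (k+1) * ((n+1).choose (k+1) : ℝ) * (c + (k+1 : ℕ)) ^ d
      = -((-1:ℝ)^k * (n.choose k : ℝ) * ((c+1) + k)^d)
        + (-1:ℝ)^(k+1) * (n.choose (k+1) : ℝ) * (c + (k+1:ℕ))^d := by
    intro k _
    rw [Nat.choose_succ_succ]
    push_cast
    ring
  have h3 : ∑ k ∈ range (n+1), (-1:ℝ)^(k+1) * (n.choose (k+1) : ℝ) * (c + (k+1:ℕ))^d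
      = altS n d c - (-1:ℝ)^0 * (n.choose 0 : ℝ) * (c + (0:ℕ))^d := by
    have h4 := Finset.sum_range_succ' (fun k => (-1:ℝ)^k * (n.choose k : ℝ) * (c + k)^d) (n+1)
    have h5 : ∑ k ∈ range (n+1+1), (-1:ℝ)^k * (n.choose k : ℝ) * (c + k)^d
        = altS n d c := by
      unfold altS
      rw [Finset.sum_range_succ, Nat.choose_succ_self]
      simp
    rw [h5] at h4
    linarith
  rw [h1, Finset.sum_congr rfl h2, Finset.sum_add_distrib, h3]
  have h6 : ∑ k ∈ range (n+1), -((-1:ℝ)^k * (n.choose k : ℝ) * ((c+1) + k)^d)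
      = - altS n d (c+1) := by
    rw [Finset.sum_neg_distrib]
    unfold altS
    push_cast
    ring
  rw [h6]
  simp
  ring

theorem altsum (n : ℕ) : ∀ d, d < n → ∀ c : ℝ, altS n d c = 0 := by
  induction n with
  | zero => intro d hd; omega
  | succ n ih =>
    intro d hd c
    rw [altS_rec]
    rcases lt_or_eq_of_le (Nat.lt_succ_iff.mp hd) with h | h
    · rw [ih d h c, ih d h (c+1), sub_zero]
    · rw [h]
      have hpt : ∀ k : ℕ, ((c : ℝ) + k) ^ n - ((c + 1) + k) ^ n
          = - ∑ j ∈ range n, (n.choose j : ℝ) * (c + k) ^ j := by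
        intro k
        have hb := add_pow (c + (k:ℝ)) 1 n
        simp only [one_pow, mul_one] at hb
        rw [Finset.sum_range_succ, Nat.choose_self] at hb
        have h7 : (c + 1) + (k:ℝ) = (c + k) + 1 := by ring
        have hs : ∑ x ∈ range n, (c + (k:ℝ))^x * (n.choose x : ℝ)
            = ∑ j ∈ range n, (n.choose j : ℝ) * (c + (k:ℝ))^j :=
          Finset.sum_congr rfl (fun j _ => by ring)
        rw [h7, hb, hs]
        push_cast
        ring
      have key : altS n n c - altS n n (c+1)
          = - ∑ j ∈ range n, (n.choose j : ℝ) * altS n j c := by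
        unfold altS
        rw [← Finset.sum_sub_distrib]
        have : ∀ k ∈ range (n+1),
            (-1:ℝ)^k * (n.choose k : ℝ) * (c + k)^n
              - (-1:ℝ)^k * (n.choose k : ℝ) * ((c+1) + k)^n
            = ∑ j ∈ range n, -((n.choose j : ℝ) * ((-1:ℝ)^k * (n.choose k : ℝ) * (c + k)^j)) := by
          intro k _
          rw [← mul_sub, hpt k, mul_neg, Finset.mul_sum, ← Finset.sum_neg_distrib]
          apply Finset.sum_congr rfl
          intro j _
          ring
        rw [Finset.sum_congr rfl this, Finset.sum_comm]
        rw [← Finset.sum_neg_distrib]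
        apply Finset.sum_congr rfl
        intro j _
        rw [Finset.sum_neg_distrib, ← Finset.mul_sum]
      rw [key]
      have hz : ∑ j ∈ range n, (n.choose j : ℝ) * altS n j c = 0 :=
        Finset.sum_eq_zero (fun j hj => by rw [ih j (Finset.mem_range.mp hj) c, mul_zero])
      rw [hz, neg_zero]

noncomputable def SA (n : ℕ) (x y : ℝ) : ℝ :=
  ∑ k ∈ range (n + 1), (n.choose k : ℝ) * abelC x k * (y + (n : ℝ) - k) ^ (n - k)

lemma SA_eval (n : ℕ) (x : ℝ) : SA (n + 1) x (-x - (n + 1 : ℕ)) = 0 := by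
  unfold SA
  have hterm : ∀ k ∈ range (n + 2),
      ((n+1).choose k : ℝ) * abelC x k * ((-x - (n+1:ℕ)) + ((n+1:ℕ) : ℝ) - k) ^ (n + 1 - k)
      = (-1:ℝ)^(n+1) * x * ((-1:ℝ)^k * ((n+1).choose k : ℝ) * (x + k)^n) := by
    intro k hk
    have hbase : ((-x - (n+1:ℕ)) + ((n+1:ℕ) : ℝ) - k) = -(x + k) := by push_cast; ring
    rw [hbase]
    match k with
    | 0 =>
      rw [abelC_zero]
      have : (-(x + (0:ℕ)))^(n+1-0) = (-1:ℝ)^(n+1) * (x^n * x) := by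
        push_cast
        rw [neg_pow]
        ring_nf
      rw [this]
      push_cast
      ring
    | j+1 =>
      have hj : j ≤ n := by
        have := Finset.mem_range.mp hk; omega
      rw [abelC_succ]
      have h1 : n + 1 - (j+1) = n - j := by omega
      have h2 : (-(x + ((j+1:ℕ):ℝ)))^(n-j) = (-1:ℝ)^(n-j) * (x + ((j+1:ℕ):ℝ))^(n-j) := by
        rw [neg_pow]
      have hsgn : (-1:ℝ)^(n-j) = (-1:ℝ)^(n+1) * (-1:ℝ)^(j+1) := by
        rw [← pow_add, show n + 1 + (j + 1) = (n - j) + 2*(j+1) by omega, pow_add, pow_mul]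
        norm_num
      have h3 : ((j:ℝ) + 1 + x)^j * (x + ((j+1:ℕ):ℝ))^(n-j) = (x + ((j+1:ℕ):ℝ))^n := by
        have : (j:ℝ) + 1 + x = x + ((j+1:ℕ):ℝ) := by push_cast; ring
        rw [this, ← pow_add, show j + (n - j) = n by omega]
      rw [h1, h2, hsgn]
      calc ((n+1).choose (j+1) : ℝ) * (x * ((j:ℝ) + 1 + x)^j) *
            ((-1:ℝ)^(n+1) * (-1:ℝ)^(j+1) * (x + ((j+1:ℕ):ℝ))^(n-j))
          = (-1:ℝ)^(n+1) * x * ((-1:ℝ)^(j+1) * ((n+1).choose (j+1) : ℝ) *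
              (((j:ℝ) + 1 + x)^j * (x + ((j+1:ℕ):ℝ))^(n-j))) := by ring
        _ = (-1:ℝ)^(n+1) * x * ((-1:ℝ)^(j+1) * ((n+1).choose (j+1) : ℝ) *
              (x + ((j+1:ℕ):ℝ))^n) := by rw [h3]
  rw [Finset.sum_congr rfl hterm, ← Finset.mul_sum]
  have := altsum (n+1) n (Nat.lt_succ_self n) x
  unfold altS at this
  rw [this, mul_zero]

lemma abelA (n : ℕ) (x : ℝ) : ∀ y : ℝ, SA n x y = (x + y + n) ^ n := by
  induction n with
  | zero => intro y; simp [SA, abelC_zero]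
  | succ n ih =>
    have hder : ∀ y : ℝ, HasDerivAt (fun y => SA (n+1) x y)
        (((n+1:ℕ) : ℝ) * (x + y + ((n+1:ℕ):ℝ)) ^ n) y := by
      intro y
      have h1 : ∀ k ∈ range (n+2), HasDerivAt
          (fun y : ℝ => ((n+1).choose k : ℝ) * abelC x k * (y + ((n+1:ℕ):ℝ) - k) ^ (n+1-k))
          (((n+1).choose k : ℝ) * abelC x k *
            (((n+1-k : ℕ):ℝ) * (y + ((n+1:ℕ):ℝ) - k) ^ (n+1-k-1) * 1)) y := by
        intro k _
        exact ((((hasDerivAt_id y).add_const _).sub_const _).pow _).const_mul _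
      have h2 := HasDerivAt.fun_sum h1
      have h3 : ∑ k ∈ range (n+2), ((n+1).choose k : ℝ) * abelC x k *
            (((n+1-k : ℕ):ℝ) * (y + ((n+1:ℕ):ℝ) - k) ^ (n+1-k-1) * 1)
          = ((n+1:ℕ):ℝ) * (x + y + ((n+1:ℕ):ℝ))^n := by
        rw [Finset.sum_range_succ]
        have htop : ((n+1).choose (n+1) : ℝ) * abelC x (n+1) *
            (((n+1-(n+1) : ℕ):ℝ) * (y + ((n+1:ℕ):ℝ) - (n+1:ℕ)) ^ (n+1-(n+1)-1) * 1) = 0 := by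
          simp
        rw [htop, add_zero]
        have hterm : ∀ k ∈ range (n+1), ((n+1).choose k : ℝ) * abelC x k *
              (((n+1-k : ℕ):ℝ) * (y + ((n+1:ℕ):ℝ) - k) ^ (n+1-k-1) * 1)
            = ((n+1:ℕ):ℝ) * ((n.choose k : ℝ) * abelC x k * ((y+1) + (n:ℝ) - k) ^ (n-k)) := by
          intro k hk
          have hk' : k ≤ n := Nat.lt_succ_iff.mp (Finset.mem_range.mp hk)
          have hc : (n.choose k : ℝ) * ((n+1:ℕ):ℝ) = ((n+1).choose k : ℝ) * ((n+1-k : ℕ):ℝ) := by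
            rw [← Nat.cast_mul, ← Nat.cast_mul, Nat.choose_mul_succ_eq]
          have he : n + 1 - k - 1 = n - k := by omega
          have hb : y + ((n+1:ℕ):ℝ) - k = (y+1) + (n:ℝ) - k := by push_cast; ring
          rw [he, hb]
          linear_combination (-(abelC x k * ((y+1) + (n:ℝ) - k) ^ (n-k))) * hc
        rw [Finset.sum_congr rfl hterm, ← Finset.mul_sum]
        have := ih (y + 1)
        unfold SA at this
        rw [this]
        push_cast
        ring
      rw [h3] at h2
      exact h2
    have hG : ∀ y : ℝ, HasDerivAt (fun y : ℝ => (x + y + ((n+1:ℕ):ℝ))^(n+1))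
        (((n+1:ℕ):ℝ) * (x + y + ((n+1:ℕ):ℝ))^n) y := by
      intro y
      have := (((hasDerivAt_id y).const_add x).add_const (((n+1:ℕ):ℝ))).fun_pow (n+1)
      simpa using this
    set F : ℝ → ℝ := fun y => SA (n+1) x y - (x + y + ((n+1:ℕ):ℝ))^(n+1) with hF
    have hF' : ∀ y, HasDerivAt F 0 y := by
      intro y
      have h := (hder y).sub (hG y)
      rw [sub_self] at h
      exact h
    have hconst : ∀ y z : ℝ, F y = F z := by
      intro y z
      exact is_const_of_deriv_eq_zero (fun t => (hF' t).differentiableAt)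
        (fun t => (hF' t).deriv) y z
    intro y
    have h0 : F (-x - ((n+1:ℕ):ℝ)) = 0 := by
      show SA (n+1) x (-x - ((n+1:ℕ):ℝ))
        - (x + (-x - ((n+1:ℕ):ℝ)) + ((n+1:ℕ):ℝ))^(n+1) = 0
      rw [SA_eval]
      have h5 : x + (-x - ((n+1:ℕ):ℝ)) + ((n+1:ℕ):ℝ) = 0 := by ring
      rw [h5, zero_pow (Nat.succ_ne_zero n), sub_zero]
    have hyz := hconst y (-x - ((n+1:ℕ):ℝ))
    rw [h0] at hyz
    have h6 : SA (n+1) x y - (x + y + ((n+1:ℕ):ℝ))^(n+1) = 0 := hyz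
    exact sub_eq_zero.mp h6

lemma abelB (n : ℕ) (x y : ℝ) :
    ∑ k ∈ range (n + 1), (n.choose k : ℝ) * abelC x k * abelC y (n - k) = abelC (x+y) n := by
  match n with
  | 0 => simp [abelC_zero]
  | m+1 =>
    rw [Finset.sum_range_succ]
    have hterm : ∀ k ∈ range (m+1),
        ((m+1).choose k : ℝ) * abelC x k * abelC y (m+1-k)
        = (((m+1).choose k : ℝ) * abelC x k * (y + ((m+1:ℕ):ℝ) - k)^(m+1-k))
          - ((m+1:ℕ):ℝ) * ((m.choose k : ℝ) * abelC x k * ((y+1) + (m:ℝ) - k)^(m-k)) := by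
      intro k hk
      have hk' : k ≤ m := Nat.lt_succ_iff.mp (Finset.mem_range.mp hk)
      have h1 : m + 1 - k = (m - k) + 1 := by omega
      rw [h1, abelC_succ]
      have hb : ((m-k:ℕ):ℝ) + 1 + y = y + ((m+1:ℕ):ℝ) - k := by
        have : ((m-k:ℕ):ℝ) = (m:ℝ) - k := by
          rw [Nat.cast_sub hk']
        rw [this]; push_cast; ring
      have hb2 : (y+1) + (m:ℝ) - k = y + ((m+1:ℕ):ℝ) - k := by push_cast; ring
      have hc : (m.choose k : ℝ) * ((m+1:ℕ):ℝ) = ((m+1).choose k : ℝ) * ((m+1-k : ℕ):ℝ) := by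
        rw [← Nat.cast_mul, ← Nat.cast_mul, Nat.choose_mul_succ_eq]
      have hy : y = (y + ((m+1:ℕ):ℝ) - k) - ((m+1-k:ℕ):ℝ) := by
        have : ((m+1-k:ℕ):ℝ) = ((m+1:ℕ):ℝ) - k := by
          rw [Nat.cast_sub (by omega)]
        rw [this]; ring
      set B := y + ((m+1:ℕ):ℝ) - k with hB
      rw [hb, hb2]
      have hpow : B ^ ((m-k)+1) = B^(m-k) * B := pow_succ B (m-k)
      calc ((m+1).choose k : ℝ) * (abelC x k) * (y * B^(m-k))
          = ((m+1).choose k : ℝ) * abelC x k * ((B - ((m+1-k:ℕ):ℝ)) * B^(m-k)) := by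
            rw [← hy]
        _ = ((m+1).choose k : ℝ) * abelC x k * B^((m-k)+1)
            - (((m+1).choose k : ℝ) * ((m+1-k:ℕ):ℝ)) * abelC x k * B^(m-k) := by
            rw [hpow]; ring
        _ = ((m+1).choose k : ℝ) * abelC x k * B^((m-k)+1)
            - ((m+1:ℕ):ℝ) * ((m.choose k : ℝ) * abelC x k * B^(m-k)) := by
            rw [← hc]; ring
        _ = _ := by rw [← h1]
    rw [Finset.sum_congr rfl hterm, Finset.sum_sub_distrib, ← Finset.mul_sum]
    have hS1 : ∑ k ∈ range (m+1),
        (((m+1).choose k : ℝ) * abelC x k * (y + ((m+1:ℕ):ℝ) - k)^(m+1-k))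
        = (x + y + ((m+1:ℕ):ℝ))^(m+1) - abelC x (m+1) := by
      have hA := abelA (m+1) x y
      unfold SA at hA
      rw [Finset.sum_range_succ] at hA
      have htop : ((m+1).choose (m+1) : ℝ) * abelC x (m+1) *
          (y + ((m+1:ℕ):ℝ) - ((m+1:ℕ):ℝ))^(m+1-(m+1)) = abelC x (m+1) := by
        simp
      rw [htop] at hA
      linarith [hA]
    have hS2 : ∑ k ∈ range (m+1), ((m.choose k : ℝ) * abelC x k * ((y+1) + (m:ℝ) - k)^(m-k))
        = (x + y + ((m+1:ℕ):ℝ))^m := by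
      have hA := abelA m x (y+1)
      unfold SA at hA
      rw [hA]
      push_cast
      ring
    rw [hS1, hS2, Nat.choose_self, Nat.sub_self, abelC_zero, abelC_succ, abelC_succ]
    have : (x + y + ((m+1:ℕ):ℝ))^(m+1) = (x + y + ((m+1:ℕ):ℝ))^m * (x + y + ((m+1:ℕ):ℝ)) :=
      pow_succ _ _
    rw [this]
    have hcast : ((m+1:ℕ):ℝ) = (m:ℝ) + 1 := by push_cast; ring
    rw [hcast]
    ring

noncomputable def tF (a x : ℝ) (k : ℕ) : ℝ := abelC a k * x ^ k / (Nat.factorial k : ℝ)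

lemma abelC_nonneg {a : ℝ} (ha : 0 ≤ a) (k : ℕ) : 0 ≤ abelC a k := by
  unfold abelC
  split
  · norm_num
  · have : (0:ℝ) ≤ (k:ℝ) + a := by positivity
    positivity

lemma tF_nonneg {a x : ℝ} (ha : 0 ≤ a) (hx : 0 ≤ x) (k : ℕ) : 0 ≤ tF a x k := by
  unfold tF
  have h1 := abelC_nonneg ha k
  have h2 : (0:ℝ) < (Nat.factorial k : ℝ) := by
    exact_mod_cast Nat.factorial_pos k
  positivity

lemma factorial_lower (m : ℕ) :
    Real.sqrt Real.pi * (Real.sqrt (2*((m+1:ℕ):ℝ)) * (((m+1:ℕ):ℝ)/Real.exp 1)^(m+1))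
      ≤ ((m+1).factorial : ℝ) := by
  have h1 : Real.sqrt Real.pi ≤ Stirling.stirlingSeq (m+1) := by
    apply Antitone.le_of_tendsto Stirling.stirlingSeq'_antitone
    exact Stirling.tendsto_stirlingSeq_sqrt_pi.comp (Filter.tendsto_add_atTop_nat 1)
  have hpos : (0:ℝ) < Real.sqrt (2*((m+1:ℕ):ℝ)) * (((m+1:ℕ):ℝ)/Real.exp 1)^(m+1) := by
    have : (0:ℝ) < ((m+1:ℕ):ℝ) := by positivity
    positivity
  have h2 : Stirling.stirlingSeq (m+1)
      = ((m+1).factorial : ℝ) / (Real.sqrt (2*((m+1:ℕ):ℝ)) * (((m+1:ℕ):ℝ)/Real.exp 1)^(m+1)) := by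
    rfl
  rw [h2, le_div_iff₀ hpos] at h1
  linarith [h1]

lemma tF_bound {a x : ℝ} (ha : 0 < a) (hx0 : 0 ≤ x) (hx1 : x ≤ 1 / Real.exp 1) (m : ℕ) :
    tF a x (m+1) ≤ (a * Real.exp a / (Real.sqrt Real.pi * Real.sqrt 2))
      * (1 / ((m+1:ℕ):ℝ) ^ ((3:ℝ)/2)) := by
  set n : ℕ := m + 1 with hn
  have hnpos : (0:ℝ) < (n:ℝ) := by positivity
  have hn1 : (1:ℝ) ≤ (n:ℝ) := by exact_mod_cast Nat.one_le_iff_ne_zero.mpr (by omega)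
  -- numerator bound
  have hxp : x ^ n ≤ (Real.exp 1)⁻¹ ^ n := by
    apply pow_le_pow_left₀ hx0
    rwa [← one_div]
  have hna : ((n:ℝ) + a) ^ (n-1) ≤ (n:ℝ)^(n-1) * Real.exp a := by
    have h1 : (n:ℝ) + a ≤ (n:ℝ) * Real.exp (a / n) := by
      have := Real.add_one_le_exp (a / n)
      calc (n:ℝ) + a = (n:ℝ) * (a / n + 1) := by field_simp; ring
        _ ≤ (n:ℝ) * Real.exp (a / n) := by
            apply mul_le_mul_of_nonneg_left this (le_of_lt hnpos)
    calc ((n:ℝ) + a) ^ (n-1) ≤ ((n:ℝ) * Real.exp (a / n)) ^ (n-1) := by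
          apply pow_le_pow_left₀ (by positivity) h1
      _ = (n:ℝ)^(n-1) * Real.exp (((n-1:ℕ):ℝ) * (a / n)) := by
          rw [mul_pow, ← Real.exp_nat_mul]
      _ ≤ (n:ℝ)^(n-1) * Real.exp a := by
          apply mul_le_mul_of_nonneg_left _ (by positivity)
          apply Real.exp_le_exp.mpr
          have hle : ((n-1 : ℕ):ℝ) ≤ (n:ℝ) := by exact_mod_cast Nat.sub_le n 1
          have hdiv : (0:ℝ) ≤ a / (n:ℝ) := by positivity
          calc ((n-1:ℕ):ℝ) * (a/(n:ℝ)) ≤ (n:ℝ) * (a/(n:ℝ)) := by nlinarith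
            _ = a := by field_simp
  have hnum : abelC a n * x ^ n ≤ a * ((n:ℝ)^(n-1) * Real.exp a) * (Real.exp 1)⁻¹ ^ n := by
    rw [hn, abelC_succ]
    have e1 : (m:ℝ) + 1 + a = (n:ℝ) + a := by rw [hn]; push_cast; ring
    have e2 : m = n - 1 := by omega
    rw [e1, e2]
    have h0 : (0:ℝ) ≤ ((n:ℝ) + a)^(n-1) := by positivity
    calc a * ((n:ℝ)+a)^(n-1) * x^n ≤ a * ((n:ℝ)+a)^(n-1) * (Real.exp 1)⁻¹ ^ n := by
          apply mul_le_mul_of_nonneg_left hxp (by positivity)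
      _ ≤ a * ((n:ℝ)^(n-1) * Real.exp a) * (Real.exp 1)⁻¹ ^ n := by
          apply mul_le_mul_of_nonneg_right _ (by positivity)
          apply mul_le_mul_of_nonneg_left hna ha.le
  -- denominator bound
  have hden := factorial_lower m
  have hdenpos : (0:ℝ) < Real.sqrt Real.pi * (Real.sqrt (2*((n:ℕ):ℝ)) * (((n:ℕ):ℝ)/Real.exp 1)^n) := by
    have hpi : (0:ℝ) < Real.pi := Real.pi_pos
    positivity
  have hfacpos : (0:ℝ) < (n.factorial : ℝ) := by exact_mod_cast n.factorial_pos
  have hstep : tF a x n ≤ (a * ((n:ℝ)^(n-1) * Real.exp a) * (Real.exp 1)⁻¹ ^ n)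
      / (Real.sqrt Real.pi * (Real.sqrt (2*((n:ℕ):ℝ)) * (((n:ℕ):ℝ)/Real.exp 1)^n)) := by
    unfold tF
    apply div_le_div₀ (by positivity) hnum hdenpos hden
  refine hstep.trans (le_of_eq ?_)
  -- now pure algebra with square roots
  have hsplit : Real.sqrt (2*((n:ℕ):ℝ)) = Real.sqrt 2 * Real.sqrt ((n:ℕ):ℝ) :=
    Real.sqrt_mul (by norm_num) _
  have hrpow : ((n:ℕ):ℝ) ^ ((3:ℝ)/2) = (n:ℝ) * Real.sqrt ((n:ℕ):ℝ) := by
    rw [show (3:ℝ)/2 = 1 + 1/2 by norm_num, Real.rpow_add hnpos, Real.rpow_one,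
      ← Real.sqrt_eq_rpow]
  have hdpow : (((n:ℕ):ℝ)/Real.exp 1)^n = (n:ℝ)^n * (Real.exp 1)⁻¹ ^ n := by
    rw [div_pow, div_eq_mul_inv, inv_pow]
  have hnn : (n:ℝ)^n = (n:ℝ)^(n-1) * (n:ℝ) := by
    rw [← pow_succ]
    congr 1
  rw [hsplit, hrpow, hdpow, hnn]
  have he : (0:ℝ) < Real.exp 1 := Real.exp_pos 1
  have hs2 : (0:ℝ) < Real.sqrt 2 := by positivity
  have hspi : (0:ℝ) < Real.sqrt Real.pi := Real.sqrt_pos.mpr Real.pi_pos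
  have hsn : (0:ℝ) < Real.sqrt ((n:ℕ):ℝ) := Real.sqrt_pos.mpr hnpos
  have hnp : (0:ℝ) < (n:ℝ)^(n-1) := by positivity
  have hep : (0:ℝ) < (Real.exp 1)⁻¹ ^ n := by positivity
  field_simp

lemma tF_summable {a x : ℝ} (ha : 0 < a) (hx0 : 0 ≤ x) (hx1 : x ≤ 1 / Real.exp 1) :
    Summable (tF a x) := by
  have h0 : Summable (fun n : ℕ => 1 / (n:ℝ)^((3:ℝ)/2)) :=
    Real.summable_one_div_nat_rpow.mpr (by norm_num)
  have hs : Summable (fun m : ℕ =>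
      (a * Real.exp a / (Real.sqrt Real.pi * Real.sqrt 2)) * (1 / ((m+1:ℕ):ℝ)^((3:ℝ)/2))) :=
    Summable.mul_left _ ((summable_nat_add_iff 1).mpr h0)
  have h1 : Summable (fun m => tF a x (m+1)) :=
    Summable.of_nonneg_of_le (fun m => tF_nonneg ha.le hx0 _)
      (fun m => tF_bound ha hx0 hx1 m) hs
  exact (summable_nat_add_iff 1).mp h1

lemma tF_mul {a b x : ℝ} (ha : 0 < a) (hb : 0 < b) (hx0 : 0 ≤ x) (hx1 : x ≤ 1 / Real.exp 1) :
    (∑' k, tF a x k) * (∑' k, tF b x k) = ∑' k, tF (a+b) x k := by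
  have hsa : Summable fun k => ‖tF a x k‖ := by
    simp only [Real.norm_eq_abs]
    exact (tF_summable ha hx0 hx1).abs
  have hsb : Summable fun k => ‖tF b x k‖ := by
    simp only [Real.norm_eq_abs]
    exact (tF_summable hb hx0 hx1).abs
  rw [tsum_mul_tsum_eq_tsum_sum_antidiagonal_of_summable_norm hsa hsb]
  apply tsum_congr
  intro n
  rw [Finset.Nat.sum_antidiagonal_eq_sum_range_succ_mk]
  have hterm : ∀ k ∈ range (n+1), tF a x k * tF b x (n-k)
      = ((n.choose k : ℝ) * abelC a k * abelC b (n-k)) * (x^n / (n.factorial : ℝ)) := by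
    intro k hk
    have hk' : k ≤ n := Nat.lt_succ_iff.mp (Finset.mem_range.mp hk)
    have hxn : x^k * x^(n-k) = x^n := by
      rw [← pow_add]
      congr 1
      omega
    have hfacR : (n.choose k : ℝ) * (k.factorial:ℝ) * ((n-k).factorial:ℝ) = (n.factorial:ℝ) := by
      exact_mod_cast congrArg (Nat.cast : ℕ → ℝ) (Nat.choose_mul_factorial_mul_factorial hk')
    have h1 : (k.factorial:ℝ) ≠ 0 := by exact_mod_cast k.factorial_ne_zero
    have h2 : ((n-k).factorial:ℝ) ≠ 0 := by exact_mod_cast (n-k).factorial_ne_zero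
    have h3 : (n.factorial:ℝ) ≠ 0 := by exact_mod_cast n.factorial_ne_zero
    unfold tF
    field_simp
    linear_combination (-(abelC a k * abelC b (n-k) * x^n)) * hfacR
      + (abelC a k * abelC b (n-k) * (n.factorial:ℝ)) * hxn
  rw [Finset.sum_congr rfl hterm, ← Finset.sum_mul, abelB]
  unfold tF
  rw [mul_div_assoc]

lemma tF_pow {a x : ℝ} (ha : 0 < a) (hx0 : 0 ≤ x) (hx1 : x ≤ 1 / Real.exp 1) :
    ∀ m : ℕ, (∑' k, tF a x k) ^ (m+1) = ∑' k, tF (((m+1:ℕ):ℝ) * a) x k := by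
  intro m
  induction m with
  | zero =>
    rw [pow_one]
    apply tsum_congr
    intro k
    norm_num
  | succ m ih =>
    rw [pow_succ, ih, tF_mul (by positivity) ha hx0 hx1]
    apply tsum_congr
    intro k
    have : ((m+1:ℕ):ℝ) * a + a = ((m+1+1:ℕ):ℝ) * a := by push_cast; ring
    rw [this]

theorem series_pow_identity (p q : ℕ) (hp : 0 < p) (hq : 0 < q)
    (x : ℝ) (hx0 : 0 ≤ x) (hx1 : x ≤ 1 / Real.exp 1) :
    (∑' k : ℕ, ((k : ℝ) * p + q) ^ ((k : ℤ) - 1) * q * x ^ k /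
        (p ^ k * (Nat.factorial k : ℝ))) ^ p
      = (∑' k : ℕ, ((k : ℝ) + 1) ^ ((k : ℤ) - 1) * x ^ k / (Nat.factorial k : ℝ)) ^ q := by
  have hpR : (0:ℝ) < (p:ℝ) := by exact_mod_cast hp
  have hqR : (0:ℝ) < (q:ℝ) := by exact_mod_cast hq
  have hpne : (p:ℝ) ≠ 0 := ne_of_gt hpR
  have hqne : (q:ℝ) ≠ 0 := ne_of_gt hqR
  have hL : ∀ k : ℕ, (((k:ℕ) : ℝ) * p + q) ^ (((k:ℕ) : ℤ) - 1) * q * x ^ k /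
      (p ^ k * (Nat.factorial k : ℝ)) = tF ((q:ℝ)/(p:ℝ)) x k := by
    intro k
    match k with
    | 0 =>
      unfold tF
      rw [abelC_zero]
      norm_num
      exact inv_mul_cancel₀ hqne
    | j+1 =>
      unfold tF
      rw [abelC_succ]
      have he : (((j+1:ℕ) : ℤ) - 1) = (j:ℤ) := by push_cast; ring
      rw [he, zpow_natCast]
      have hbase : (j:ℝ) + 1 + (q:ℝ)/(p:ℝ) = ((((j+1:ℕ)):ℝ) * p + q)/p := by
        field_simp
        push_cast
        ring
      rw [hbase, div_pow]
      have hfne : (((j+1:ℕ).factorial:ℝ)) ≠ 0 := by exact_mod_cast (j+1).factorial_ne_zero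
      have hppow : ((p:ℝ))^(j+1) ≠ 0 := pow_ne_zero _ hpne
      field_simp
      ring
  have hR : ∀ k : ℕ, (((k:ℕ) : ℝ) + 1) ^ (((k:ℕ) : ℤ) - 1) * x ^ k / (Nat.factorial k : ℝ)
      = tF 1 x k := by
    intro k
    match k with
    | 0 =>
      unfold tF
      rw [abelC_zero]
      norm_num
    | j+1 =>
      unfold tF
      rw [abelC_succ]
      have he : (((j+1:ℕ) : ℤ) - 1) = (j:ℤ) := by push_cast; ring
      rw [he, zpow_natCast]
      push_cast
      ring
  rw [tsum_congr hL, tsum_congr hR]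
  obtain ⟨m, rfl⟩ : ∃ m, p = m + 1 := ⟨p - 1, by omega⟩
  obtain ⟨l, rfl⟩ : ∃ l, q = l + 1 := ⟨q - 1, by omega⟩
  have hqp : (0:ℝ) < ((l+1:ℕ):ℝ)/((m+1:ℕ):ℝ) := by positivity
  rw [tF_pow hqp hx0 hx1 m, tF_pow (by norm_num : (0:ℝ) < 1) hx0 hx1 l]
  have harg : ((m+1:ℕ):ℝ) * (((l+1:ℕ):ℝ)/((m+1:ℕ):ℝ)) = ((l+1:ℕ):ℝ) * 1 := by
    field_simp
  rw [harg]
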